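/- (Symplectic capacity of an ellipsoid.) Let ℏ > 0, let M be a real symmetric positive definite 2n×2n matrix with symplectic eigenvalues λ_1 ≥ … ≥ λ_n > 0, and let Ω = {z ∈ ℝ^{2n} : zᵀMz ≤ ℏ}. Then for every R > 0: there exists a real symplectic matrix S with S(B_R) ⊆ Ω if and only if λ_1 R² ≤ ℏ. Consequently the supremum of πR² over all symplectic balls S(B_R) contained in Ω equals πℏ/λ_1. -/

import Mathlib

open Matrix MeasureTheory
open scoped ComplexOrder

noncomputable section

/-- The standard symplectic matrix `J = [[0, I], [-I, 0]]` of size `2n`, indexed by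
`Fin n ⊕ Fin n`: `Sum.inl j` is the coordinate `x_j` and `Sum.inr j` is `p_j`. -/
def stdJ (n : ℕ) : Matrix (Fin n ⊕ Fin n) (Fin n ⊕ Fin n) ℝ :=
  Matrix.fromBlocks 0 1 (-1) 0

/-- A real `2n × 2n` matrix `S` is symplectic if `Sᵀ J S = J`. -/
def IsSymplectic {n : ℕ} (S : Matrix (Fin n ⊕ Fin n) (Fin n ⊕ Fin n) ℝ) : Prop :=
  Sᵀ * stdJ n * S = stdJ n

section AuxLemmas

set_option linter.unnecessarySeqFocus false

lemma stdJ_transpose (n : ℕ) : (stdJ n)ᵀ = -(stdJ n) := by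
  ext i j
  rcases i with i | i <;> rcases j with j | j <;>
    simp [stdJ, Matrix.fromBlocks, Matrix.transpose_apply, Matrix.one_apply, eq_comm]

lemma stdJ_mul_self (n : ℕ) : stdJ n * stdJ n = -1 := by
  ext i j
  rw [stdJ, Matrix.fromBlocks_multiply]
  rcases i with i | i <;> rcases j with j | j <;>
    simp [Matrix.fromBlocks, Matrix.one_apply]

lemma conj_dot {m : Type*} [Fintype m] (A S : Matrix m m ℝ) (z : m → ℝ) :
    z ⬝ᵥ ((Sᵀ * A * S) *ᵥ z) = (S *ᵥ z) ⬝ᵥ (A *ᵥ (S *ᵥ z)) := by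
  rw [← Matrix.mulVec_mulVec, ← Matrix.mulVec_mulVec, Matrix.dotProduct_mulVec,
    Matrix.vecMul_transpose]

lemma cs_aux {m : Type*} [Fintype m] (N : Matrix m m ℝ) (hsymm : Nᵀ = N)
    (hpos : ∀ x, 0 ≤ x ⬝ᵥ N *ᵥ x) (x y : m → ℝ) :
    (x ⬝ᵥ N *ᵥ y) ^ 2 ≤ (x ⬝ᵥ N *ᵥ x) * (y ⬝ᵥ N *ᵥ y) := by
  have hsy : ∀ u v : m → ℝ, u ⬝ᵥ N *ᵥ v = v ⬝ᵥ N *ᵥ u := by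
    intro u v
    rw [Matrix.dotProduct_mulVec, ← Matrix.mulVec_transpose, hsymm, dotProduct_comm]
  have key : ∀ t : ℝ, 0 ≤ (y ⬝ᵥ N *ᵥ y) * (t * t) + (2 * (x ⬝ᵥ N *ᵥ y)) * t + (x ⬝ᵥ N *ᵥ x) := by
    intro t
    have h := hpos (x + t • y)
    have hexp : (x + t • y) ⬝ᵥ N *ᵥ (x + t • y)
        = (y ⬝ᵥ N *ᵥ y) * (t * t) + (2 * (x ⬝ᵥ N *ᵥ y)) * t + (x ⬝ᵥ N *ᵥ x) := by
      simp only [Matrix.mulVec_add, Matrix.mulVec_smul, add_dotProduct,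
        smul_dotProduct, dotProduct_add, dotProduct_smul, smul_eq_mul,
        hsy y x]
      ring
    linarith [hexp ▸ h]
  have hd := discrim_le_zero key
  rw [discrim] at hd
  nlinarith [hd]

lemma stdJ_det_isUnit (n : ℕ) : IsUnit (stdJ n).det := by
  have h : (stdJ n).det * (stdJ n).det = 1 := by
    rw [← Matrix.det_mul, stdJ_mul_self, Matrix.det_neg, Matrix.det_one]
    have : Even (n + n) := ⟨n, rfl⟩
    simp [Fintype.card_sum, this.neg_one_pow]
  exact IsUnit.of_mul_eq_one _ h

lemma IsSymplectic.det_isUnit {n : ℕ} {S : Matrix (Fin n ⊕ Fin n) (Fin n ⊕ Fin n) ℝ}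
    (hS : IsSymplectic S) : IsUnit S.det := by
  have h := congrArg Matrix.det hS
  rw [Matrix.det_mul, Matrix.det_mul, Matrix.det_transpose] at h
  rcases stdJ_det_isUnit n with ⟨u, hu⟩
  have hJ : (stdJ n).det ≠ 0 := by rw [← hu]; exact u.ne_zero
  have h3 : (S.det * S.det) * (stdJ n).det = 1 * (stdJ n).det := by linear_combination h
  have h2 : S.det * S.det = 1 := mul_right_cancel₀ hJ h3
  exact IsUnit.of_mul_eq_one _ h2

lemma IsSymplectic.J_mul_inv {n : ℕ} {S : Matrix (Fin n ⊕ Fin n) (Fin n ⊕ Fin n) ℝ}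
    (hS : IsSymplectic S) : stdJ n * S⁻¹ = Sᵀ * stdJ n := by
  have := congrArg (· * S⁻¹) hS
  simpa [Matrix.mul_nonsing_inv_cancel_right _ _ hS.det_isUnit] using this.symm

lemma stdJ_mulVec_inl {n : ℕ} (j : Fin n) :
    stdJ n *ᵥ Pi.single (Sum.inl j) (1 : ℝ) = -Pi.single (Sum.inr j) 1 := by
  ext i
  rw [Matrix.mulVec_single]
  rcases i with i | i <;>
    simp [stdJ, Matrix.fromBlocks, Pi.single_apply, Matrix.one_apply, eq_comm]

lemma stdJ_mulVec_inr {n : ℕ} (j : Fin n) :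
    stdJ n *ᵥ Pi.single (Sum.inr j) (1 : ℝ) = Pi.single (Sum.inl j) 1 := by
  ext i
  rw [Matrix.mulVec_single]
  rcases i with i | i <;>
    simp [stdJ, Matrix.fromBlocks, Pi.single_apply, Matrix.one_apply, eq_comm]

lemma D_mulVec_inl {n : ℕ} (lam : Fin n → ℝ) (j : Fin n) :
    Matrix.fromBlocks (Matrix.diagonal lam) 0 0 (Matrix.diagonal lam) *ᵥ
      Pi.single (Sum.inl j) (1 : ℝ) = lam j • (Pi.single (Sum.inl j) 1 : Fin n ⊕ Fin n → ℝ) := by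
  ext i
  rw [Matrix.mulVec_single]
  rcases i with i | i <;>
    simp [Matrix.fromBlocks, Matrix.diagonal_apply, Pi.single_apply, eq_comm] <;>
      (try (split <;> simp_all))

lemma D_mulVec_inr {n : ℕ} (lam : Fin n → ℝ) (j : Fin n) :
    Matrix.fromBlocks (Matrix.diagonal lam) 0 0 (Matrix.diagonal lam) *ᵥ
      Pi.single (Sum.inr j) (1 : ℝ) = lam j • (Pi.single (Sum.inr j) 1 : Fin n ⊕ Fin n → ℝ) := by
  ext i
  rw [Matrix.mulVec_single]
  rcases i with i | i <;>
    simp [Matrix.fromBlocks, Matrix.diagonal_apply, Pi.single_apply, eq_comm] <;>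
      (try (split <;> simp_all))

lemma D_mulVec_apply {n : ℕ} (lam : Fin n → ℝ) (z : Fin n ⊕ Fin n → ℝ) (i : Fin n ⊕ Fin n) :
    (Matrix.fromBlocks (Matrix.diagonal lam) 0 0 (Matrix.diagonal lam) *ᵥ z) i
      = Sum.elim lam lam i * z i := by
  rcases i with i | i <;>
    simp [Matrix.mulVec, dotProduct, Fintype.sum_sum_type, Matrix.fromBlocks,
      Matrix.diagonal_apply, Finset.sum_ite_eq, Finset.mul_sum]

end AuxLemmas

set_option maxHeartbeats 1000000

/-- **symplectic capacity of an ellipsoid.** Let `M` be symmetric positive definite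
with symplectic eigenvalues `λ₁ ≥ … ≥ λₙ > 0` and `Ω = {z : zᵀMz ≤ ℏ}`. For every `R > 0`, a
symplectic ball `S(B_R)` fits inside `Ω` iff `λ₁ R² ≤ ℏ`; consequently the supremum of `π R²` over
all symplectic balls `S(B_R) ⊆ Ω` equals `πℏ/λ₁`. (`B_R = {z : z ⬝ᵥ z ≤ R²}`.) -/
theorem stmt13 {n : ℕ} (hn : 0 < n) (ℏ : ℝ) (hℏ : 0 < ℏ)
    (M : Matrix (Fin n ⊕ Fin n) (Fin n ⊕ Fin n) ℝ)
    (hMSymm : M.IsSymm) (hMPos : M.PosDef)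
    (lam : Fin n → ℝ) (hlampos : ∀ j, 0 < lam j) (hord : Antitone lam)
    (S₀ : Matrix (Fin n ⊕ Fin n) (Fin n ⊕ Fin n) ℝ) (hS₀ : IsSymplectic S₀)
    (hdiag : S₀ᵀ * M * S₀ = Matrix.fromBlocks (Matrix.diagonal lam) 0 0 (Matrix.diagonal lam)) :
    (∀ R : ℝ, 0 < R →
      ((∃ S : Matrix (Fin n ⊕ Fin n) (Fin n ⊕ Fin n) ℝ, IsSymplectic S ∧
          S.mulVec '' {z : Fin n ⊕ Fin n → ℝ | z ⬝ᵥ z ≤ R ^ 2}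
            ⊆ {z : Fin n ⊕ Fin n → ℝ | z ⬝ᵥ M.mulVec z ≤ ℏ})
        ↔ lam ⟨0, hn⟩ * R ^ 2 ≤ ℏ)) ∧
    sSup {a : ℝ | ∃ R : ℝ, 0 < R ∧ a = Real.pi * R ^ 2 ∧
        ∃ S : Matrix (Fin n ⊕ Fin n) (Fin n ⊕ Fin n) ℝ, IsSymplectic S ∧
          S.mulVec '' {z : Fin n ⊕ Fin n → ℝ | z ⬝ᵥ z ≤ R ^ 2}
            ⊆ {z : Fin n ⊕ Fin n → ℝ | z ⬝ᵥ M.mulVec z ≤ ℏ}}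
      = Real.pi * ℏ / lam ⟨0, hn⟩ := by
  have hl0 : 0 < lam ⟨0, hn⟩ := hlampos _
  have hdot_nonneg : ∀ w : Fin n ⊕ Fin n → ℝ, 0 ≤ w ⬝ᵥ w := fun w =>
    Finset.sum_nonneg fun i _ => mul_self_nonneg (w i)
  -- the easy direction
  have easy : ∀ R : ℝ, 0 < R → lam ⟨0, hn⟩ * R ^ 2 ≤ ℏ →
      (∃ S : Matrix (Fin n ⊕ Fin n) (Fin n ⊕ Fin n) ℝ, IsSymplectic S ∧
        S.mulVec '' {z : Fin n ⊕ Fin n → ℝ | z ⬝ᵥ z ≤ R ^ 2}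
          ⊆ {z : Fin n ⊕ Fin n → ℝ | z ⬝ᵥ M.mulVec z ≤ ℏ}) := by
    intro R hR hle
    refine ⟨S₀, hS₀, ?_⟩
    rintro x ⟨z, hz, rfl⟩
    simp only [Set.mem_setOf_eq] at hz ⊢
    have h1 : (S₀ *ᵥ z) ⬝ᵥ M *ᵥ (S₀ *ᵥ z)
        = z ⬝ᵥ (Matrix.fromBlocks (Matrix.diagonal lam) 0 0 (Matrix.diagonal lam) *ᵥ z) := by
      rw [← conj_dot, hdiag]
    have h2 : z ⬝ᵥ (Matrix.fromBlocks (Matrix.diagonal lam) 0 0 (Matrix.diagonal lam) *ᵥ z)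
        ≤ lam ⟨0, hn⟩ * (z ⬝ᵥ z) := by
      have hrw : z ⬝ᵥ (Matrix.fromBlocks (Matrix.diagonal lam) 0 0 (Matrix.diagonal lam) *ᵥ z)
          = ∑ i, z i * (Sum.elim lam lam i * z i) := by
        simp only [dotProduct, D_mulVec_apply]
      rw [hrw, show z ⬝ᵥ z = ∑ i, z i * z i from rfl, Finset.mul_sum]
      apply Finset.sum_le_sum
      intro i _
      have hlle : Sum.elim lam lam i ≤ lam ⟨0, hn⟩ := by
        rcases i with i | i <;> exact hord (by simp [Fin.le_def])
      nlinarith [mul_self_nonneg (z i)]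
    have hzz0 : 0 ≤ z ⬝ᵥ z := hdot_nonneg z
    rw [h1]
    nlinarith [h2, hz, hzz0, hl0, hle]
  -- the hard direction
  have hard : ∀ R : ℝ, 0 < R →
      (∃ S : Matrix (Fin n ⊕ Fin n) (Fin n ⊕ Fin n) ℝ, IsSymplectic S ∧
        S.mulVec '' {z : Fin n ⊕ Fin n → ℝ | z ⬝ᵥ z ≤ R ^ 2}
          ⊆ {z : Fin n ⊕ Fin n → ℝ | z ⬝ᵥ M.mulVec z ≤ ℏ}) → lam ⟨0, hn⟩ * R ^ 2 ≤ ℏ := by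
    rintro R hR ⟨S, hS, hsub⟩
    set l0 : ℝ := lam ⟨0, hn⟩ with hl0d
    set N : Matrix (Fin n ⊕ Fin n) (Fin n ⊕ Fin n) ℝ := Sᵀ * M * S with hNdef
    have hNapp : ∀ z, z ⬝ᵥ (N *ᵥ z) = (S *ᵥ z) ⬝ᵥ M *ᵥ (S *ᵥ z) := fun z => conj_dot M S z
    have h1 : ∀ z : Fin n ⊕ Fin n → ℝ, z ⬝ᵥ z ≤ R ^ 2 → z ⬝ᵥ (N *ᵥ z) ≤ ℏ := by
      intro z hz
      rw [hNapp]
      exact hsub (Set.mem_image_of_mem _ hz)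
    have h2 : ∀ w : Fin n ⊕ Fin n → ℝ, R ^ 2 * (w ⬝ᵥ (N *ᵥ w)) ≤ ℏ * (w ⬝ᵥ w) := by
      intro w
      rcases eq_or_ne w 0 with rfl | hw
      · simp
      · have hww : 0 < w ⬝ᵥ w :=
          (hdot_nonneg w).lt_of_ne fun h => hw (dotProduct_self_eq_zero.mp h.symm)
        set t : ℝ := R / Real.sqrt (w ⬝ᵥ w) with ht
        have hsq : Real.sqrt (w ⬝ᵥ w) ^ 2 = w ⬝ᵥ w := Real.sq_sqrt hww.le
        have hs0 : Real.sqrt (w ⬝ᵥ w) ≠ 0 := ne_of_gt (Real.sqrt_pos.mpr hww)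
        have htt : t * t = R ^ 2 / (w ⬝ᵥ w) := by
          rw [ht, div_mul_div_comm, Real.mul_self_sqrt hww.le, sq]
        have ht2 : t * t * (w ⬝ᵥ w) = R ^ 2 := by
          rw [htt, div_mul_cancel₀ _ (ne_of_gt hww)]
        have hzle : (t • w) ⬝ᵥ (t • w) ≤ R ^ 2 := by
          rw [smul_dotProduct, dotProduct_smul, smul_eq_mul, smul_eq_mul,
            ← mul_assoc, ht2]
        have happ := h1 (t • w) hzle
        have happ' : t * t * (w ⬝ᵥ (N *ᵥ w)) ≤ ℏ := by
          rw [Matrix.mulVec_smul, smul_dotProduct, dotProduct_smul,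
            smul_eq_mul, smul_eq_mul, ← mul_assoc] at happ
          exact happ
        calc R ^ 2 * (w ⬝ᵥ N *ᵥ w) = (t * t * (w ⬝ᵥ w)) * (w ⬝ᵥ N *ᵥ w) := by rw [ht2]
          _ = (t * t * (w ⬝ᵥ N *ᵥ w)) * (w ⬝ᵥ w) := by ring
          _ ≤ ℏ * (w ⬝ᵥ w) := mul_le_mul_of_nonneg_right happ' hww.le
    have hNsymm : Nᵀ = N := by
      rw [hNdef]
      rw [Matrix.transpose_mul, Matrix.transpose_mul, Matrix.transpose_transpose, hMSymm.eq,
        Matrix.mul_assoc]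
    have hNnn : ∀ x, 0 ≤ x ⬝ᵥ (N *ᵥ x) := by
      intro x
      rw [hNapp]
      simpa using hMPos.posSemidef.dotProduct_mulVec_nonneg (S *ᵥ x)
    have hdet := hS.det_isUnit
    have hdet₀ := hS₀.det_isUnit
    have hdetT₀ : IsUnit (S₀ᵀ).det := by rw [Matrix.det_transpose]; exact hdet₀
    set e : Fin n ⊕ Fin n → ℝ := Pi.single (Sum.inl ⟨0, hn⟩) 1 with he
    set f : Fin n ⊕ Fin n → ℝ := Pi.single (Sum.inr ⟨0, hn⟩) 1 with hf
    set u : Fin n ⊕ Fin n → ℝ := S₀ *ᵥ e with hu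
    set v : Fin n ⊕ Fin n → ℝ := S₀ *ᵥ f with hv
    set a : Fin n ⊕ Fin n → ℝ := S⁻¹ *ᵥ u with ha
    set b : Fin n ⊕ Fin n → ℝ := S⁻¹ *ᵥ v with hb
    have hSa : S *ᵥ a = u := by
      rw [ha, Matrix.mulVec_mulVec, Matrix.mul_nonsing_inv _ hdet, Matrix.one_mulVec]
    have hSb : S *ᵥ b = v := by
      rw [hb, Matrix.mulVec_mulVec, Matrix.mul_nonsing_inv _ hdet, Matrix.one_mulVec]
    have hu0 : u ≠ 0 := by
      intro h
      have he0 : e = 0 := by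
        have h2 := congrArg (fun w => S₀⁻¹ *ᵥ w) h
        simpa [hu, Matrix.mulVec_mulVec, Matrix.nonsing_inv_mul _ hdet₀,
          Matrix.one_mulVec] using h2
      have := congrFun he0 (Sum.inl ⟨0, hn⟩)
      simp [he, Pi.single_eq_same] at this
    have hv0 : v ≠ 0 := by
      intro h
      have hf0 : f = 0 := by
        have h2 := congrArg (fun w => S₀⁻¹ *ᵥ w) h
        simpa [hv, Matrix.mulVec_mulVec, Matrix.nonsing_inv_mul _ hdet₀,
          Matrix.one_mulVec] using h2
      have := congrFun hf0 (Sum.inr ⟨0, hn⟩)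
      simp [hf, Pi.single_eq_same] at this
    have ha0 : a ≠ 0 := fun h => hu0 (by rw [← hSa, h, Matrix.mulVec_zero])
    have hb0 : b ≠ 0 := fun h => hv0 (by rw [← hSb, h, Matrix.mulVec_zero])
    have hJf : stdJ n *ᵥ f = e := stdJ_mulVec_inr _
    have hJe : stdJ n *ᵥ e = -f := stdJ_mulVec_inl _
    have hS₀' : S₀ᵀ * stdJ n * S₀ = stdJ n := hS₀
    have hA1 : (S₀ᵀ)⁻¹ *ᵥ e = stdJ n *ᵥ v := by
      conv_lhs => rw [← hJf, ← hS₀']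
      rw [Matrix.mulVec_mulVec, Matrix.mul_assoc,
        Matrix.nonsing_inv_mul_cancel_left _ _ hdetT₀, ← Matrix.mulVec_mulVec, hv]
    have hA2 : (S₀ᵀ)⁻¹ *ᵥ f = -(stdJ n *ᵥ u) := by
      have hfe : f = -(stdJ n *ᵥ e) := by rw [hJe, neg_neg]
      conv_lhs => rw [hfe]
      rw [Matrix.mulVec_neg]
      conv_lhs => rw [show stdJ n = S₀ᵀ * stdJ n * S₀ from hS₀'.symm]
      rw [Matrix.mulVec_mulVec, Matrix.mul_assoc,
        Matrix.nonsing_inv_mul_cancel_left _ _ hdetT₀, ← Matrix.mulVec_mulVec, hu]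
    have hMS₀ : M * S₀
        = (S₀ᵀ)⁻¹ * Matrix.fromBlocks (Matrix.diagonal lam) 0 0 (Matrix.diagonal lam) := by
      have h := Matrix.nonsing_inv_mul_cancel_left S₀ᵀ (M * S₀) hdetT₀
      rw [← Matrix.mul_assoc S₀ᵀ M S₀, hdiag] at h
      exact h.symm
    have hJS : stdJ n * S⁻¹ = Sᵀ * stdJ n := hS.J_mul_inv
    have hMa : M *ᵥ u = l0 • ((S₀ᵀ)⁻¹ *ᵥ e) := by
      rw [hu, Matrix.mulVec_mulVec, hMS₀, ← Matrix.mulVec_mulVec, he, D_mulVec_inl,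
        Matrix.mulVec_smul]
    have hMb : M *ᵥ v = l0 • ((S₀ᵀ)⁻¹ *ᵥ f) := by
      rw [hv, Matrix.mulVec_mulVec, hMS₀, ← Matrix.mulVec_mulVec, hf, D_mulVec_inr,
        Matrix.mulVec_smul]
    have hb' : stdJ n *ᵥ b = Sᵀ *ᵥ (stdJ n *ᵥ v) := by
      rw [hb, Matrix.mulVec_mulVec, hJS, ← Matrix.mulVec_mulVec]
    have ha' : stdJ n *ᵥ a = Sᵀ *ᵥ (stdJ n *ᵥ u) := by
      rw [ha, Matrix.mulVec_mulVec, hJS, ← Matrix.mulVec_mulVec]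
    have hNa : N *ᵥ a = l0 • (stdJ n *ᵥ b) := by
      have hstep : N *ᵥ a = Sᵀ *ᵥ (M *ᵥ u) := by
        rw [hNdef, Matrix.mul_assoc, ← Matrix.mulVec_mulVec, ← Matrix.mulVec_mulVec, hSa]
      rw [hstep, hMa, Matrix.mulVec_smul, hA1, hb']
    have hNb : N *ᵥ b = -(l0 • (stdJ n *ᵥ a)) := by
      have hstep : N *ᵥ b = Sᵀ *ᵥ (M *ᵥ v) := by
        rw [hNdef, Matrix.mul_assoc, ← Matrix.mulVec_mulVec, ← Matrix.mulVec_mulVec, hSb]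
      rw [hstep, hMb, Matrix.mulVec_smul, hA2, Matrix.mulVec_neg, ha', smul_neg]
    set s : ℝ := a ⬝ᵥ (stdJ n *ᵥ b) with hsdef
    have skew : ∀ x y : Fin n ⊕ Fin n → ℝ, x ⬝ᵥ (stdJ n *ᵥ y) = -(y ⬝ᵥ (stdJ n *ᵥ x)) := by
      intro x y
      rw [Matrix.dotProduct_mulVec, ← Matrix.mulVec_transpose, stdJ_transpose,
        Matrix.neg_mulVec, neg_dotProduct, dotProduct_comm]
    have haa : a ⬝ᵥ (N *ᵥ a) = l0 * s := by
      rw [hNa, dotProduct_smul, smul_eq_mul]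
    have hbb : b ⬝ᵥ (N *ᵥ b) = l0 * s := by
      rw [hNb, dotProduct_neg, dotProduct_smul, smul_eq_mul, skew b a]
      ring
    have hspos : 0 < s := by
      have hq : (0:ℝ) < a ⬝ᵥ (N *ᵥ a) := by
        rw [hNapp, hSa]
        simpa using hMPos.dotProduct_mulVec_pos hu0
      have h3 : 0 < l0 * s := haa ▸ hq
      nlinarith [h3, hl0]
    have hbbpos : 0 < b ⬝ᵥ b :=
      (hdot_nonneg b).lt_of_ne fun h => hb0 (dotProduct_self_eq_zero.mp h.symm)
    have hJJ : ∀ x : Fin n ⊕ Fin n → ℝ, (stdJ n *ᵥ x) ⬝ᵥ (stdJ n *ᵥ x) = x ⬝ᵥ x := by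
      intro x
      rw [Matrix.dotProduct_mulVec, ← Matrix.mulVec_transpose, Matrix.mulVec_mulVec,
        stdJ_transpose, Matrix.neg_mul, stdJ_mul_self, neg_neg, Matrix.one_mulVec]
    have hNaNa : (N *ᵥ a) ⬝ᵥ (N *ᵥ a) = l0 ^ 2 * (b ⬝ᵥ b) := by
      rw [hNa, smul_dotProduct, dotProduct_smul, hJJ, smul_eq_mul, smul_eq_mul]
      ring
    have hana : a ⬝ᵥ (N *ᵥ (N *ᵥ a)) = l0 ^ 2 * (b ⬝ᵥ b) := by
      rw [Matrix.dotProduct_mulVec, ← Matrix.mulVec_transpose, hNsymm, hNaNa]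
    set X : ℝ := (N *ᵥ a) ⬝ᵥ (N *ᵥ (N *ᵥ a)) with hXdef
    have hCS := cs_aux N hNsymm hNnn a (N *ᵥ a)
    rw [hana, haa] at hCS
    -- hCS : (l0^2 * (b⬝b))^2 ≤ (l0*s) * X
    have h2Na := h2 (N *ᵥ a)
    rw [hNaNa] at h2Na
    -- h2Na : R^2 * X ≤ ℏ * (l0^2 * (b⬝b))
    have h2b := h2 b
    rw [hbb] at h2b
    -- h2b : R^2 * (l0*s) ≤ ℏ * (b⬝b)
    have hstep : R ^ 2 * (l0 ^ 2 * (b ⬝ᵥ b)) ≤ ℏ * (l0 * s) := by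
      have hc1 : R ^ 2 * ((l0 ^ 2 * (b ⬝ᵥ b)) ^ 2) ≤ R ^ 2 * ((l0 * s) * X) :=
        mul_le_mul_of_nonneg_left hCS (sq_nonneg R)
      have hc2 : (l0 * s) * (R ^ 2 * X) ≤ (l0 * s) * (ℏ * (l0 ^ 2 * (b ⬝ᵥ b))) :=
        mul_le_mul_of_nonneg_left h2Na (mul_pos hl0 hspos).le
      nlinarith [hc1, hc2, mul_pos (mul_pos hl0 hl0) hbbpos, hl0, hbbpos, hspos]
    have hmul := mul_le_mul hstep h2b
      (mul_nonneg (sq_nonneg R) (mul_pos hl0 hspos).le)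
      (mul_nonneg hℏ.le (mul_pos hl0 hspos).le)
    have hBP : (0:ℝ) < (l0 * s) * (b ⬝ᵥ b) := mul_pos (mul_pos hl0 hspos) hbbpos
    have hfinal : (l0 * R ^ 2) ^ 2 ≤ ℏ ^ 2 := by
      rw [← mul_le_mul_iff_of_pos_right hBP]
      calc (l0 * R ^ 2) ^ 2 * ((l0 * s) * (b ⬝ᵥ b))
          = (R ^ 2 * (l0 ^ 2 * (b ⬝ᵥ b))) * (R ^ 2 * (l0 * s)) := by ring
        _ ≤ (ℏ * (l0 * s)) * (ℏ * (b ⬝ᵥ b)) := hmul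
        _ = ℏ ^ 2 * ((l0 * s) * (b ⬝ᵥ b)) := by ring
    nlinarith [hfinal, hℏ, mul_pos hl0 (mul_pos hR hR)]
  refine ⟨fun R hR => ⟨hard R hR, easy R hR⟩, ?_⟩
  apply IsGreatest.csSup_eq
  constructor
  · refine ⟨Real.sqrt (ℏ / lam ⟨0, hn⟩), Real.sqrt_pos.mpr (div_pos hℏ hl0), ?_, ?_⟩
    · rw [Real.sq_sqrt (div_pos hℏ hl0).le, mul_div_assoc]
    · refine easy _ (Real.sqrt_pos.mpr (div_pos hℏ hl0)) ?_
      rw [Real.sq_sqrt (div_pos hℏ hl0).le]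
      rw [mul_div_cancel₀ _ (ne_of_gt hl0)]
  · rintro x ⟨R, hR, rfl, hex⟩
    have h := hard R hR hex
    rw [le_div_iff₀ hl0]
    nlinarith [Real.pi_pos, h, hR]
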